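/- Let T be a tournament on n ≥ 4 vertices, and let c4(T) = C4(T)/C(n,4) and t4(T) = T4(T)/C(n,4), where C4(T) is the number of 4-element vertex subsets whose induced subtournament contains a directed 4-cycle and T4(T) is the number of 4-element vertex subsets spanning a transitive subtournament. Then c4(T) ≤ 1 − t4(T) and c4(T) ≤ t4(T) + 3/(n−2). -/

import Mathlib

open Finset

/-- A tournament on `Fin n`: an orientation of the complete graph, i.e. no loops and
for all distinct `x, y` exactly one of `r x y`, `r y x` holds. -/
def IsTournament {n : ℕ} (r : Fin n → Fin n → Prop) : Prop :=
  (∀ x, ¬ r x x) ∧ ∀ x y : Fin n, x ≠ y → ((r x y ∧ ¬ r y x) ∨ (r y x ∧ ¬ r x y))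

/-- `s` spans a cyclic triangle: `s = {x,y,z}` with `x→y→z→x`. -/
def IsCyclicTriple {n : ℕ} (r : Fin n → Fin n → Prop) (s : Finset (Fin n)) : Prop :=
  ∃ x y z : Fin n, x ≠ y ∧ y ≠ z ∧ x ≠ z ∧ s = {x, y, z} ∧ r x y ∧ r y z ∧ r z x

/-- `s` spans a transitive triple. -/
def IsTransTriple {n : ℕ} (r : Fin n → Fin n → Prop) (s : Finset (Fin n)) : Prop :=
  ∃ x y z : Fin n, x ≠ y ∧ y ≠ z ∧ x ≠ z ∧ s = {x, y, z} ∧ r x y ∧ r y z ∧ r x z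

/-- `s` contains a directed 4-cycle through all of its (four) elements. -/
def HasCycle4 {n : ℕ} (r : Fin n → Fin n → Prop) (s : Finset (Fin n)) : Prop :=
  ∃ a b c d : Fin n, a ≠ b ∧ a ≠ c ∧ a ≠ d ∧ b ≠ c ∧ b ≠ d ∧ c ≠ d ∧
    s = {a, b, c, d} ∧ r a b ∧ r b c ∧ r c d ∧ r d a

/-- `s` spans a transitive 4-vertex subtournament. -/
def IsTrans4 {n : ℕ} (r : Fin n → Fin n → Prop) (s : Finset (Fin n)) : Prop :=
  ∃ a b c d : Fin n, a ≠ b ∧ a ≠ c ∧ a ≠ d ∧ b ≠ c ∧ b ≠ d ∧ c ≠ d ∧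
    s = {a, b, c, d} ∧ r a b ∧ r a c ∧ r a d ∧ r b c ∧ r b d ∧ r c d

open Classical in
/-- `C3(T)`: number of 3-element vertex subsets spanning a cyclic triangle. -/
noncomputable def cyc3Count {n : ℕ} (r : Fin n → Fin n → Prop) : ℕ :=
  ((univ.powersetCard 3).filter (fun s => IsCyclicTriple r s)).card

open Classical in
/-- `T3(T)`: number of 3-element vertex subsets spanning a transitive triple. -/
noncomputable def trans3Count {n : ℕ} (r : Fin n → Fin n → Prop) : ℕ :=
  ((univ.powersetCard 3).filter (fun s => IsTransTriple r s)).card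

open Classical in
/-- `C4(T)`: number of 4-element vertex subsets containing a directed 4-cycle. -/
noncomputable def cyc4Count {n : ℕ} (r : Fin n → Fin n → Prop) : ℕ :=
  ((univ.powersetCard 4).filter (fun s => HasCycle4 r s)).card

open Classical in
/-- `T4(T)`: number of 4-element vertex subsets spanning a transitive subtournament. -/
noncomputable def trans4Count {n : ℕ} (r : Fin n → Fin n → Prop) : ℕ :=
  ((univ.powersetCard 4).filter (fun s => IsTrans4 r s)).card

lemma ch2 (n : ℕ) : 2 * n.choose 2 = n * (n - 1) := by
  induction n with
  | zero => simp
  | succ m ih =>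
    rw [Nat.choose_succ_succ]
    cases m with
    | zero => simp
    | succ k =>
      simp only [Nat.succ_sub_one] at *
      rw [Nat.mul_add, ih, Nat.choose_one_right]
      ring

lemma ch3 (n : ℕ) : 6 * n.choose 3 = n * (n - 1) * (n - 2) := by
  induction n with
  | zero => simp
  | succ m ih =>
    rw [Nat.choose_succ_succ]
    cases m with
    | zero => decide
    | succ k =>
      cases k with
      | zero => decide
      | succ j =>
        simp only [Nat.succ_sub_one, Nat.succ_sub_succ, Nat.sub_zero] at *
        rw [Nat.mul_add, ih]
        have := ch2 (j + 2)
        simp only [Nat.succ_sub_one] at this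
        nlinarith [this]

lemma ch4 (n : ℕ) : 24 * n.choose 4 = n * (n - 1) * (n - 2) * (n - 3) := by
  induction n with
  | zero => simp
  | succ m ih =>
    rw [Nat.choose_succ_succ]
    cases m with
    | zero => decide
    | succ k =>
      cases k with
      | zero => decide
      | succ j =>
        cases j with
        | zero => decide
        | succ i =>
          simp only [Nat.succ_sub_one, Nat.succ_sub_succ, Nat.sub_zero] at *
          rw [Nat.mul_add, ih]
          have := ch3 (i + 3)
          simp only [Nat.succ_sub_one, Nat.succ_sub_succ, Nat.sub_zero] at this
          nlinarith [this]

variable {n : ℕ} {r : Fin n → Fin n → Prop}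

lemma asymm' (hT : IsTournament r) {x y : Fin n} (h : r x y) : ¬ r y x := by
  by_cases hxy : x = y
  · subst hxy; exact fun _ => hT.1 x h
  · rcases hT.2 x y hxy with ⟨h1, h2⟩ | ⟨h1, h2⟩
    · exact h2
    · exact absurd h h2

lemma ne_of_r (hT : IsTournament r) {x y : Fin n} (h : r x y) : x ≠ y := by
  rintro rfl; exact hT.1 x h

lemma total' (hT : IsTournament r) {x y : Fin n} (hxy : x ≠ y) (h : ¬ r x y) : r y x := by
  rcases hT.2 x y hxy with ⟨h1, _⟩ | ⟨h1, _⟩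
  · exact absurd h1 h
  · exact h1

lemma card3 {a b c : Fin n} (hab : a ≠ b) (hac : a ≠ c) (hbc : b ≠ c) :
    ({a, b, c} : Finset (Fin n)).card = 3 := by
  rw [card_insert_of_notMem (by simp [hab, hac]), card_insert_of_notMem (by simp [hbc]),
    card_singleton]

lemma card4 {a b c d : Fin n} (hab : a ≠ b) (hac : a ≠ c) (had : a ≠ d)
    (hbc : b ≠ c) (hbd : b ≠ d) (hcd : c ≠ d) :
    ({a, b, c, d} : Finset (Fin n)).card = 4 := by
  rw [card_insert_of_notMem (by simp [hab, hac, had])]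
  rw [card3 hbc hbd hcd]

lemma cyc_in {s : Finset (Fin n)} (h : IsCyclicTriple r s) {v : Fin n} (hv : v ∈ s) :
    ∃ w ∈ s, w ≠ v ∧ r w v := by
  obtain ⟨x, y, z, hxy, hyz, hxz, rfl, rxy, ryz, rzx⟩ := h
  simp only [mem_insert, mem_singleton] at hv
  rcases hv with rfl | rfl | rfl
  · exact ⟨z, by simp, hxz.symm, rzx⟩
  · exact ⟨x, by simp, hxy, rxy⟩
  · exact ⟨y, by simp, hyz, ryz⟩

lemma trans_src {s : Finset (Fin n)} (h : IsTransTriple r s) :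
    ∃ v ∈ s, ∀ w ∈ s, w ≠ v → r v w := by
  obtain ⟨x, y, z, hxy, hyz, hxz, rfl, rxy, ryz, rxz⟩ := h
  refine ⟨x, by simp, fun w hw hwx => ?_⟩
  simp only [mem_insert, mem_singleton] at hw
  rcases hw with rfl | rfl | rfl
  · exact absurd rfl hwx
  · exact rxy
  · exact rxz

lemma not_cyc_trans (hT : IsTournament r) {s : Finset (Fin n)}
    (hc : IsCyclicTriple r s) (ht : IsTransTriple r s) : False := by
  obtain ⟨v, hv, hsrc⟩ := trans_src ht
  obtain ⟨w, hw, hwv, hrwv⟩ := cyc_in hc hv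
  exact asymm' hT (hsrc w hw hwv) hrwv

lemma cyc4_in {s : Finset (Fin n)} (h : HasCycle4 r s) {v : Fin n} (hv : v ∈ s) :
    ∃ w ∈ s, w ≠ v ∧ r w v := by
  obtain ⟨a, b, c, d, hab, hac, had, hbc, hbd, hcd, rfl, rab, rbc, rcd, rda⟩ := h
  simp only [mem_insert, mem_singleton] at hv
  rcases hv with rfl | rfl | rfl | rfl
  · exact ⟨d, by simp, had.symm, rda⟩
  · exact ⟨a, by simp, hab, rab⟩
  · exact ⟨b, by simp, hbc, rbc⟩
  · exact ⟨c, by simp, hcd, rcd⟩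

lemma trans4_src {s : Finset (Fin n)} (h : IsTrans4 r s) :
    ∃ v ∈ s, ∀ w ∈ s, w ≠ v → r v w := by
  obtain ⟨a, b, c, d, hab, hac, had, hbc, hbd, hcd, rfl, rab, rac, rad, rbc, rbd, rcd⟩ := h
  refine ⟨a, by simp, fun w hw hwa => ?_⟩
  simp only [mem_insert, mem_singleton] at hw
  rcases hw with rfl | rfl | rfl | rfl
  · exact absurd rfl hwa
  · exact rab
  · exact rac
  · exact rad

lemma not_cyc4_trans4 (hT : IsTournament r) {s : Finset (Fin n)}
    (hc : HasCycle4 r s) (ht : IsTrans4 r s) : False := by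
  obtain ⟨v, hv, hsrc⟩ := trans4_src ht
  obtain ⟨w, hw, hwv, hrwv⟩ := cyc4_in hc hv
  exact asymm' hT (hsrc w hw hwv) hrwv

lemma sort3 (hT : IsTournament r) {s : Finset (Fin n)}
    (tr : ∀ x y z, x ∈ s → y ∈ s → z ∈ s → r x y → r y z → r x z)
    {x y z : Fin n} (hx : x ∈ s) (hy : y ∈ s) (hz : z ∈ s)
    (hxy : x ≠ y) (hyz : y ≠ z) (hxz : x ≠ z) :
    ∃ p q u : Fin n, p ∈ ({x, y, z} : Finset (Fin n)) ∧ q ∈ ({x, y, z} : Finset (Fin n)) ∧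
      u ∈ ({x, y, z} : Finset (Fin n)) ∧ r p q ∧ r q u ∧ r p u := by
  rcases hT.2 x y hxy with ⟨rxy, _⟩ | ⟨ryx, _⟩
  · rcases hT.2 z x hxz.symm with ⟨rzx, _⟩ | ⟨rxz, _⟩
    · exact ⟨z, x, y, by simp, by simp, by simp, rzx, rxy, tr z x y hz hx hy rzx rxy⟩
    · rcases hT.2 z y hyz.symm with ⟨rzy, _⟩ | ⟨ryz, _⟩
      · exact ⟨x, z, y, by simp, by simp, by simp, rxz, rzy, rxy⟩
      · exact ⟨x, y, z, by simp, by simp, by simp, rxy, ryz, rxz⟩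
  · rcases hT.2 z y hyz.symm with ⟨rzy, _⟩ | ⟨ryz, _⟩
    · exact ⟨z, y, x, by simp, by simp, by simp, rzy, ryx, tr z y x hz hy hx rzy ryx⟩
    · rcases hT.2 z x hxz.symm with ⟨rzx, _⟩ | ⟨rxz, _⟩
      · exact ⟨y, z, x, by simp, by simp, by simp, ryz, rzx, ryx⟩
      · exact ⟨y, x, z, by simp, by simp, by simp, ryx, rxz, ryz⟩

lemma trans4_of_chain (hT : IsTournament r) {s : Finset (Fin n)} (hcard : s.card = 4)
    {w1 w2 w3 w4 : Fin n} (h1 : w1 ∈ s) (h2 : w2 ∈ s) (h3 : w3 ∈ s) (h4 : w4 ∈ s)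
    (e12 : r w1 w2) (e13 : r w1 w3) (e14 : r w1 w4)
    (e23 : r w2 w3) (e24 : r w2 w4) (e34 : r w3 w4) : IsTrans4 r s := by
  have d12 := ne_of_r hT e12
  have d13 := ne_of_r hT e13
  have d14 := ne_of_r hT e14
  have d23 := ne_of_r hT e23
  have d24 := ne_of_r hT e24
  have d34 := ne_of_r hT e34
  refine ⟨w1, w2, w3, w4, d12, d13, d14, d23, d24, d34, ?_, e12, e13, e14, e23, e24, e34⟩
  refine (eq_of_subset_of_card_le ?_ ?_).symm
  · simp [insert_subset_iff, h1, h2, h3, h4]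
  · rw [card4 d12 d13 d14 d23 d24 d34, hcard]

lemma trans4_of_nocyc (hT : IsTournament r) {s : Finset (Fin n)} (hcard : s.card = 4)
    (hno : ∀ t ⊆ s, ¬ IsCyclicTriple r t) : IsTrans4 r s := by
  have tr : ∀ x y z, x ∈ s → y ∈ s → z ∈ s → r x y → r y z → r x z := by
    intro x y z hx hy hz rxy ryz
    by_contra hxz
    have hxy := ne_of_r hT rxy
    have hyz := ne_of_r hT ryz
    by_cases hxz' : x = z
    · subst hxz'; exact asymm' hT rxy ryz
    · have rzx := total' hT hxz' hxz
      exact hno {x, y, z} (by simp [insert_subset_iff, hx, hy, hz])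
        ⟨x, y, z, hxy, hyz, hxz', rfl, rxy, ryz, rzx⟩
  obtain ⟨a, t, hat, hins, ht3⟩ := Finset.card_eq_succ.mp (show s.card = 3 + 1 from hcard)
  obtain ⟨b, c, d, hbc, hbd, hcd, rfl⟩ := Finset.card_eq_three.mp ht3
  have ha : a ∈ s := by rw [← hins]; simp
  have hb : b ∈ s := by rw [← hins]; simp
  have hc : c ∈ s := by rw [← hins]; simp
  have hd : d ∈ s := by rw [← hins]; simp
  obtain ⟨p, q, u, hp, hq, hu, rpq, rqu, rpu⟩ := sort3 hT tr hb hc hd hbc hcd hbd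
  have hps : p ∈ s := by
    simp only [mem_insert, mem_singleton] at hp; rcases hp with rfl | rfl | rfl <;> assumption
  have hqs : q ∈ s := by
    simp only [mem_insert, mem_singleton] at hq; rcases hq with rfl | rfl | rfl <;> assumption
  have hus : u ∈ s := by
    simp only [mem_insert, mem_singleton] at hu; rcases hu with rfl | rfl | rfl <;> assumption
  have hap : a ≠ p := by rintro rfl; exact hat hp
  have haq : a ≠ q := by rintro rfl; exact hat hq
  have hau : a ≠ u := by rintro rfl; exact hat hu
  rcases hT.2 a p hap with ⟨rap, _⟩ | ⟨rpa, _⟩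
  · exact trans4_of_chain hT hcard ha hps hqs hus rap
      (tr a p q ha hps hqs rap rpq) (tr a p u ha hps hus rap rpu) rpq rpu rqu
  · rcases hT.2 a q haq with ⟨raq, _⟩ | ⟨rqa, _⟩
    · exact trans4_of_chain hT hcard hps ha hqs hus rpa rpq rpu raq
        (tr a q u ha hqs hus raq rqu) rqu
    · rcases hT.2 a u hau with ⟨rau, _⟩ | ⟨rua, _⟩
      · exact trans4_of_chain hT hcard hps hqs ha hus rpq
          (tr p q a hps hqs ha rpq rqa) rpu rqa rqu rau
      · exact trans4_of_chain hT hcard hps hqs hus ha rpq rpu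
          (tr p q a hps hqs ha rpq rqa) rqu (tr q u a hqs hus ha rqu rua) rua

open Classical in
noncomputable def cycIn {n : ℕ} (r : Fin n → Fin n → Prop) (s : Finset (Fin n)) : ℕ :=
  ((s.powersetCard 3).filter (fun t => IsCyclicTriple r t)).card

open Classical in
lemma two_le_cycIn (hT : IsTournament r) {s : Finset (Fin n)} (h : HasCycle4 r s) :
    2 ≤ cycIn r s := by
  obtain ⟨a, b, c, d, hab, hac, had, hbc, hbd, hcd, rfl, rab, rbc, rcd, rda⟩ := h
  have mem1 : ∀ t : Finset (Fin n), t ⊆ {a,b,c,d} → t.card = 3 → IsCyclicTriple r t →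
      t ∈ ((({a,b,c,d} : Finset (Fin n)).powersetCard 3).filter (fun t => IsCyclicTriple r t)) := by
    intro t hsub hc3 hcyc
    simp only [mem_filter, mem_powersetCard]
    exact ⟨⟨hsub, hc3⟩, hcyc⟩
  rcases hT.2 a c hac with ⟨rac, _⟩ | ⟨rca, _⟩
  · -- {c,d,a} cyclic
    rcases hT.2 b d hbd with ⟨rbd, _⟩ | ⟨rdb, _⟩
    · -- {d,a,b} cyclic
      refine Finset.one_lt_card.mpr ⟨{c,d,a}, mem1 _ (by simp [insert_subset_iff])
        (card3 hcd (Ne.symm hac) (Ne.symm had)) ⟨c,d,a,hcd,Ne.symm had,Ne.symm hac,rfl,rcd,rda,rac⟩,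
        {d,a,b}, mem1 _ (by simp [insert_subset_iff])
        (card3 (Ne.symm had) (Ne.symm hbd) hab) ⟨d,a,b,Ne.symm had,hab,Ne.symm hbd,rfl,rda,rab,rbd⟩, ?_⟩
      intro hEq
      have : b ∈ ({c,d,a} : Finset (Fin n)) := hEq ▸ (by simp)
      simp only [mem_insert, mem_singleton] at this
      rcases this with h' | h' | h' <;> simp_all
    · -- {b,c,d} cyclic
      refine Finset.one_lt_card.mpr ⟨{c,d,a}, mem1 _ (by simp [insert_subset_iff])
        (card3 hcd (Ne.symm hac) (Ne.symm had)) ⟨c,d,a,hcd,Ne.symm had,Ne.symm hac,rfl,rcd,rda,rac⟩,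
        {b,c,d}, mem1 _ (by simp [insert_subset_iff])
        (card3 hbc hbd hcd) ⟨b,c,d,hbc,hcd,hbd,rfl,rbc,rcd,rdb⟩, ?_⟩
      intro hEq
      have : a ∈ ({b,c,d} : Finset (Fin n)) := hEq ▸ (by simp)
      simp only [mem_insert, mem_singleton] at this
      rcases this with h' | h' | h' <;> simp_all
  · -- {a,b,c} cyclic
    rcases hT.2 b d hbd with ⟨rbd, _⟩ | ⟨rdb, _⟩
    · refine Finset.one_lt_card.mpr ⟨{a,b,c}, mem1 _ (by simp [insert_subset_iff])
        (card3 hab hac hbc) ⟨a,b,c,hab,hbc,hac,rfl,rab,rbc,rca⟩,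
        {d,a,b}, mem1 _ (by simp [insert_subset_iff])
        (card3 (Ne.symm had) (Ne.symm hbd) hab) ⟨d,a,b,Ne.symm had,hab,Ne.symm hbd,rfl,rda,rab,rbd⟩, ?_⟩
      intro hEq
      have : d ∈ ({a,b,c} : Finset (Fin n)) := hEq ▸ (by simp)
      simp only [mem_insert, mem_singleton] at this
      rcases this with h' | h' | h' <;> simp_all
    · refine Finset.one_lt_card.mpr ⟨{a,b,c}, mem1 _ (by simp [insert_subset_iff])
        (card3 hab hac hbc) ⟨a,b,c,hab,hbc,hac,rfl,rab,rbc,rca⟩,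
        {b,c,d}, mem1 _ (by simp [insert_subset_iff])
        (card3 hbc hbd hcd) ⟨b,c,d,hbc,hcd,hbd,rfl,rbc,rcd,rdb⟩, ?_⟩
      intro hEq
      have : a ∈ ({b,c,d} : Finset (Fin n)) := hEq.symm ▸ (by simp : a ∈ ({a,b,c} : Finset (Fin n)))
      simp only [mem_insert, mem_singleton] at this
      rcases this with h' | h' | h' <;> simp_all

open Classical in
lemma one_le_cycIn (hT : IsTournament r) {s : Finset (Fin n)} (hcard : s.card = 4)
    (h : ¬ IsTrans4 r s) : 1 ≤ cycIn r s := by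
  rw [Nat.one_le_iff_ne_zero]
  intro h0
  apply h
  apply trans4_of_nocyc hT hcard
  intro t hts hcyc
  obtain ⟨x, y, z, hxy, hyz, hxz, rfl, rxy, ryz, rzx⟩ := hcyc
  have : ({x,y,z} : Finset (Fin n)) ∈
      ((s.powersetCard 3).filter (fun t => IsCyclicTriple r t)) := by
    simp only [mem_filter, mem_powersetCard]
    exact ⟨⟨hts, card3 hxy hxz hyz⟩, ⟨x, y, z, hxy, hyz, hxz, rfl, rxy, ryz, rzx⟩⟩
  rw [cycIn] at h0
  have := Finset.card_eq_zero.mp h0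
  simp_all

open Classical in
lemma superset_count {t : Finset (Fin n)} (ht3 : t.card = 3) :
    (((univ : Finset (Fin n)).powersetCard 4).filter (fun s => t ⊆ s)).card = n - 3 := by
  have himg : ((univ : Finset (Fin n)).powersetCard 4).filter (fun s => t ⊆ s)
      = tᶜ.image (fun x => insert x t) := by
    ext s
    simp only [mem_filter, mem_powersetCard, mem_image, mem_compl]
    constructor
    · rintro ⟨⟨hsub, hcard4⟩, hts⟩
      have h1 : (s \ t).card = 1 := by rw [card_sdiff_of_subset hts, hcard4, ht3]
      obtain ⟨x, hx⟩ := Finset.card_eq_one.mp h1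
      have hxt : x ∉ t := by
        have : x ∈ s \ t := hx ▸ mem_singleton_self x
        exact (mem_sdiff.mp this).2
      refine ⟨x, hxt, ?_⟩
      rw [insert_eq, ← hx, sdiff_union_of_subset hts]
    · rintro ⟨x, hxt, rfl⟩
      refine ⟨⟨subset_univ _, ?_⟩, subset_insert _ _⟩
      rw [card_insert_of_notMem hxt, ht3]
  rw [himg, card_image_of_injOn, card_compl, Fintype.card_fin, ht3]
  intro x hx y hy hEq
  simp only [coe_compl, Set.mem_compl_iff, mem_coe] at hx hy
  simp only at hEq
  have : x ∈ insert y t := by rw [← hEq]; exact mem_insert_self x t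
  rcases mem_insert.mp this with h | h
  · exact h
  · exact absurd h hx

open Classical in
lemma sum_cycIn (r : Fin n → Fin n → Prop) :
    ∑ s ∈ (univ : Finset (Fin n)).powersetCard 4, cycIn r s
      = (((univ : Finset (Fin n)).powersetCard 3).filter (fun t => IsCyclicTriple r t)).card * (n - 3) := by
  have step1 : ∀ s ∈ (univ : Finset (Fin n)).powersetCard 4,
      cycIn r s = ((((univ : Finset (Fin n)).powersetCard 3).filter
        (fun t => IsCyclicTriple r t)).filter (fun t => t ⊆ s)).card := by
    intro s _
    unfold cycIn
    congr 1
    ext t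
    simp only [mem_filter, mem_powersetCard, subset_univ, true_and]
    tauto
  rw [Finset.sum_congr rfl step1]
  set C := ((univ : Finset (Fin n)).powersetCard 3).filter (fun t => IsCyclicTriple r t) with hC
  calc ∑ s ∈ (univ : Finset (Fin n)).powersetCard 4, (C.filter (fun t => t ⊆ s)).card
      = ∑ s ∈ (univ : Finset (Fin n)).powersetCard 4, ∑ t ∈ C, if t ⊆ s then 1 else 0 := by
        refine Finset.sum_congr rfl fun s _ => ?_
        rw [Finset.card_filter]
    _ = ∑ t ∈ C, ∑ s ∈ (univ : Finset (Fin n)).powersetCard 4, if t ⊆ s then 1 else 0 :=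
        Finset.sum_comm
    _ = ∑ _t ∈ C, (n - 3) := by
        refine Finset.sum_congr rfl fun t ht => ?_
        rw [← Finset.card_filter]
        exact superset_count (mem_powersetCard.mp (Finset.mem_filter.mp ht).1).2
    _ = C.card * (n - 3) := by rw [Finset.sum_const, smul_eq_mul]

open Classical in
lemma count4_le (hT : IsTournament r) : cyc4Count r + trans4Count r ≤ n.choose 4 := by
  have hdisj : Disjoint (((univ : Finset (Fin n)).powersetCard 4).filter (fun s => HasCycle4 r s))
      (((univ : Finset (Fin n)).powersetCard 4).filter (fun s => IsTrans4 r s)) := by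
    rw [Finset.disjoint_left]
    intro s hs1 hs2
    exact not_cyc4_trans4 hT (Finset.mem_filter.mp hs1).2 (Finset.mem_filter.mp hs2).2
  calc cyc4Count r + trans4Count r
      = ((((univ : Finset (Fin n)).powersetCard 4).filter (fun s => HasCycle4 r s))
          ∪ (((univ : Finset (Fin n)).powersetCard 4).filter (fun s => IsTrans4 r s))).card := by
        rw [Finset.card_union_of_disjoint hdisj]; rfl
    _ ≤ ((univ : Finset (Fin n)).powersetCard 4).card :=
        Finset.card_le_card (Finset.union_subset (Finset.filter_subset _ _) (Finset.filter_subset _ _))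
    _ = n.choose 4 := by rw [Finset.card_powersetCard, Finset.card_univ, Fintype.card_fin]

open Classical in
lemma count3_le (hT : IsTournament r) : cyc3Count r + trans3Count r ≤ n.choose 3 := by
  have hdisj : Disjoint (((univ : Finset (Fin n)).powersetCard 3).filter (fun s => IsCyclicTriple r s))
      (((univ : Finset (Fin n)).powersetCard 3).filter (fun s => IsTransTriple r s)) := by
    rw [Finset.disjoint_left]
    intro s hs1 hs2
    exact not_cyc_trans hT (Finset.mem_filter.mp hs1).2 (Finset.mem_filter.mp hs2).2
  calc cyc3Count r + trans3Count r
      = ((((univ : Finset (Fin n)).powersetCard 3).filter (fun s => IsCyclicTriple r s))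
          ∪ (((univ : Finset (Fin n)).powersetCard 3).filter (fun s => IsTransTriple r s))).card := by
        rw [Finset.card_union_of_disjoint hdisj]; rfl
    _ ≤ ((univ : Finset (Fin n)).powersetCard 3).card :=
        Finset.card_le_card (Finset.union_subset (Finset.filter_subset _ _) (Finset.filter_subset _ _))
    _ = n.choose 3 := by rw [Finset.card_powersetCard, Finset.card_univ, Fintype.card_fin]

open Classical in
lemma countI (hT : IsTournament r) :
    cyc4Count r + n.choose 4 ≤ trans4Count r + cyc3Count r * (n - 3) := by
  have key : ∀ s ∈ (univ : Finset (Fin n)).powersetCard 4,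
      ((if HasCycle4 r s then 1 else 0) + 1 : ℕ)
        ≤ (if IsTrans4 r s then 1 else 0) + cycIn r s := by
    intro s hs
    have hcard : s.card = 4 := (mem_powersetCard.mp hs).2
    by_cases hc : HasCycle4 r s
    · rw [if_pos hc, if_neg (fun ht => not_cyc4_trans4 hT hc ht)]
      have := two_le_cycIn hT hc
      omega
    · rw [if_neg hc]
      by_cases ht : IsTrans4 r s
      · rw [if_pos ht]; omega
      · rw [if_neg ht]
        have := one_le_cycIn hT hcard ht
        omega
  have hsum := Finset.sum_le_sum key
  rw [Finset.sum_add_distrib, Finset.sum_add_distrib, ← Finset.card_filter,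
    ← Finset.card_filter, Finset.sum_const, smul_eq_mul, mul_one, sum_cycIn r] at hsum
  calc cyc4Count r + n.choose 4
      = (((univ : Finset (Fin n)).powersetCard 4).filter (fun s => HasCycle4 r s)).card
        + ((univ : Finset (Fin n)).powersetCard 4).card := by
        rw [Finset.card_powersetCard, Finset.card_univ, Fintype.card_fin]; rfl
    _ ≤ (((univ : Finset (Fin n)).powersetCard 4).filter (fun s => IsTrans4 r s)).card
        + cyc3Count r * (n - 3) := hsum
    _ = trans4Count r + cyc3Count r * (n - 3) := rfl

open Classical in
noncomputable def deg {n : ℕ} (r : Fin n → Fin n → Prop) (v : Fin n) : ℕ :=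
  ((univ : Finset (Fin n)).filter (fun w => r v w)).card

open Classical in
lemma sum_deg (hT : IsTournament r) : ∑ v : Fin n, deg r v = n.choose 2 := by
  have h2 : 2 * ∑ v : Fin n, deg r v = 2 * n.choose 2 := by
    set E := (univ : Finset (Fin n × Fin n)).filter (fun p => r p.1 p.2) with hE
    have hcardE : ∑ v : Fin n, deg r v = E.card := by
      rw [Finset.card_filter]
      rw [← Finset.univ_product_univ, Finset.sum_product]
      refine Finset.sum_congr rfl fun v _ => ?_
      rw [deg, Finset.card_filter]
    have hswap : E.card = (E.image Prod.swap).card :=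
      (Finset.card_image_of_injective _ Prod.swap_injective).symm
    have hdisj : Disjoint E (E.image Prod.swap) := by
      rw [Finset.disjoint_left]
      intro p hp hp2
      obtain ⟨q, hq, hqp⟩ := Finset.mem_image.mp hp2
      have h1 : r p.1 p.2 := (Finset.mem_filter.mp hp).2
      have h2 : r q.1 q.2 := (Finset.mem_filter.mp hq).2
      rw [← hqp] at h1
      exact asymm' hT h2 h1
    have hunion : E ∪ E.image Prod.swap = (univ : Finset (Fin n)).offDiag := by
      ext p
      rw [hE]
      simp only [Finset.mem_union, Finset.mem_image, Finset.mem_filter, Finset.mem_offDiag,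
        Finset.mem_univ, true_and]
      constructor
      · rintro (h | ⟨q, hq, rfl⟩)
        · exact ne_of_r hT h
        · exact (ne_of_r hT hq).symm
      · intro hne
        rcases hT.2 p.1 p.2 hne with ⟨h, _⟩ | ⟨h, _⟩
        · exact Or.inl h
        · exact Or.inr ⟨p.swap, h, Prod.swap_swap p⟩
    have : E.card + (E.image Prod.swap).card = ((univ : Finset (Fin n)).offDiag).card := by
      rw [← Finset.card_union_of_disjoint hdisj, hunion]
    rw [Finset.offDiag_card, Finset.card_univ, Fintype.card_fin] at this
    have hnn : n * (n - 1) = n * n - n := by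
      rcases n with _ | m
      · simp
      · rw [Nat.succ_sub_one, show (m+1)*(m+1) = (m+1)*m + (m+1) by ring, Nat.add_sub_cancel]
    rw [hcardE, two_mul, ch2, hnn]
    rw [hswap] at this ⊢
    omega
  omega

open Classical in
lemma sum_deg_choose2 (hT : IsTournament r) :
    ∑ v : Fin n, (deg r v).choose 2 ≤ trans3Count r := by
  have hcard : ∑ v : Fin n, (deg r v).choose 2 =
      ((univ : Finset (Fin n)).sigma
        (fun v => ((univ : Finset (Fin n)).filter (fun w => r v w)).powersetCard 2)).card := by
    rw [Finset.card_sigma]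
    exact Finset.sum_congr rfl fun v _ => by rw [Finset.card_powersetCard]; rfl
  rw [hcard, trans3Count]
  apply Finset.card_le_card_of_injOn (fun p => insert p.1 p.2)
  · rintro ⟨v, t⟩ hvt
    rw [Finset.mem_coe, Finset.mem_sigma] at hvt
    obtain ⟨tsub, tcard⟩ := mem_powersetCard.mp hvt.2
    obtain ⟨x, y, hxy, rfl⟩ := Finset.card_eq_two.mp tcard
    have rvx : r v x := (Finset.mem_filter.mp (tsub (by simp))).2
    have rvy : r v y := (Finset.mem_filter.mp (tsub (by simp))).2
    have hvx := ne_of_r hT rvx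
    have hvy := ne_of_r hT rvy
    simp only [Finset.mem_coe, Finset.mem_filter, mem_powersetCard]
    refine ⟨⟨subset_univ _, card3 hvx hvy hxy⟩, ?_⟩
    rcases hT.2 x y hxy with ⟨hxy2, _⟩ | ⟨hyx2, _⟩
    · exact ⟨v, x, y, hvx, hxy, hvy, rfl, rvx, hxy2, rvy⟩
    · exact ⟨v, y, x, hvy, hxy.symm, hvx, by rw [Finset.pair_comm x y], rvy, hyx2, rvx⟩
  · rintro ⟨v, t⟩ hvt ⟨v', t'⟩ hvt' hEq
    simp only at hEq
    rw [Finset.mem_coe, Finset.mem_sigma] at hvt hvt'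
    have htsub := (mem_powersetCard.mp hvt.2).1
    have htsub' := (mem_powersetCard.mp hvt'.2).1
    have hvnt : v ∉ t := fun h => hT.1 v (Finset.mem_filter.mp (htsub h)).2
    have hvnt' : v' ∉ t' := fun h => hT.1 v' (Finset.mem_filter.mp (htsub' h)).2
    have hvv : v = v' := by
      by_contra hne
      have h1 : v ∈ insert v' t' := hEq ▸ Finset.mem_insert_self v t
      have h2 : v' ∈ insert v t := hEq.symm ▸ Finset.mem_insert_self v' t'
      have hv : v ∈ t' := by rcases Finset.mem_insert.mp h1 with h | h; exact absurd h hne; exact h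
      have hv' : v' ∈ t := by
        rcases Finset.mem_insert.mp h2 with h | h
        · exact absurd h (Ne.symm hne)
        · exact h
      exact asymm' hT (Finset.mem_filter.mp (htsub' hv)).2 (Finset.mem_filter.mp (htsub hv')).2
    subst hvv
    have htt : t = t' := by
      have := congrArg (fun s => Finset.erase s v) hEq
      simpa [Finset.erase_insert hvnt, Finset.erase_insert hvnt'] using this
    subst htt
    rfl

set_option maxHeartbeats 1000000 in
theorem stmt_3 {n : ℕ} (hn : 4 ≤ n) (r : Fin n → Fin n → Prop) (hT : IsTournament r) :
    (cyc4Count r : ℝ) / (n.choose 4 : ℝ) ≤ 1 - (trans4Count r : ℝ) / (n.choose 4 : ℝ) ∧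
    (cyc4Count r : ℝ) / (n.choose 4 : ℝ) ≤
      (trans4Count r : ℝ) / (n.choose 4 : ℝ) + 3 / ((n : ℝ) - 2) := by
  have hN : (0:ℝ) < (n.choose 4 : ℝ) := by exact_mod_cast Nat.choose_pos hn
  have hnR : (4:ℝ) ≤ (n:ℝ) := by exact_mod_cast hn
  have h2 : (0:ℝ) < (n:ℝ) - 2 := by linarith
  have h3n : 3 ≤ n := by omega
  constructor
  · rw [le_sub_iff_add_le, ← add_div, div_le_one hN]
    exact_mod_cast count4_le hT
  · -- real versions of counting facts
    have hIr : (cyc4Count r : ℝ) + (n.choose 4 : ℝ)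
        ≤ (trans4Count r : ℝ) + (cyc3Count r : ℝ) * ((n:ℝ) - 3) := by
      have := countI hT
      have h' : ((cyc4Count r + n.choose 4 : ℕ) : ℝ)
          ≤ ((trans4Count r + cyc3Count r * (n - 3) : ℕ) : ℝ) := by exact_mod_cast this
      push_cast [Nat.cast_sub h3n] at h'
      linarith
    have hN4 : 24 * (n.choose 4 : ℝ) = (n:ℝ) * ((n:ℝ)-1) * ((n:ℝ)-2) * ((n:ℝ)-3) := by
      have := ch4 n
      have h' : ((24 * n.choose 4 : ℕ) : ℝ) = ((n * (n-1) * (n-2) * (n-3) : ℕ) : ℝ) := by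
        exact_mod_cast this
      push_cast [Nat.cast_sub h3n, Nat.cast_sub (show 2 ≤ n by omega),
        Nat.cast_sub (show 1 ≤ n by omega)] at h'
      linarith
    have hN3 : 6 * (n.choose 3 : ℝ) = (n:ℝ) * ((n:ℝ)-1) * ((n:ℝ)-2) := by
      have := ch3 n
      have h' : ((6 * n.choose 3 : ℕ) : ℝ) = ((n * (n-1) * (n-2) : ℕ) : ℝ) := by
        exact_mod_cast this
      push_cast [Nat.cast_sub (show 2 ≤ n by omega), Nat.cast_sub (show 1 ≤ n by omega)] at h'
      linarith
    have hN2 : 2 * (n.choose 2 : ℝ) = (n:ℝ) * ((n:ℝ)-1) := by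
      have := ch2 n
      have h' : ((2 * n.choose 2 : ℕ) : ℝ) = ((n * (n-1) : ℕ) : ℝ) := by exact_mod_cast this
      push_cast [Nat.cast_sub (show 1 ≤ n by omega)] at h'
      linarith
    -- C3 bound
    have hII : 24 * (cyc3Count r : ℝ) ≤ (n:ℝ) * ((n:ℝ)-1) * ((n:ℝ)+1) := by
      have h3le : (cyc3Count r : ℝ) + (trans3Count r : ℝ) ≤ (n.choose 3 : ℝ) := by
        exact_mod_cast count3_le hT
      have hd2 : (∑ v : Fin n, ((deg r v).choose 2 : ℝ)) ≤ (trans3Count r : ℝ) := by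
        exact_mod_cast sum_deg_choose2 hT
      have hsd : (∑ v : Fin n, (deg r v : ℝ)) = (n.choose 2 : ℝ) := by
        exact_mod_cast sum_deg hT
      have hCS : (∑ v : Fin n, (deg r v : ℝ)) ^ 2
          ≤ (n:ℝ) * ∑ v : Fin n, (deg r v : ℝ) ^ 2 := by
        have := sq_sum_le_card_mul_sum_sq (s := (univ : Finset (Fin n)))
          (f := fun v => (deg r v : ℝ))
        simpa [Finset.card_univ] using this
      have hsum2 : ∑ v : Fin n, ((deg r v).choose 2 : ℝ)
          = ((∑ v : Fin n, (deg r v : ℝ) ^ 2) - ∑ v : Fin n, (deg r v : ℝ)) / 2 := by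
        rw [← Finset.sum_sub_distrib, Finset.sum_div]
        refine Finset.sum_congr rfl fun v _ => ?_
        rw [Nat.cast_choose_two]
        ring
      set S := ∑ v : Fin n, (deg r v : ℝ) ^ 2
      set D := ∑ v : Fin n, (deg r v : ℝ)
      have hnpos : (0:ℝ) < (n:ℝ) := by linarith
      nlinarith [hCS, h3le, hd2, hsum2, hsd, hN3, hN2, hnpos, sq_nonneg ((n:ℝ) - 1)]
    have key : (cyc4Count r : ℝ) * ((n:ℝ) - 2)
        ≤ (trans4Count r : ℝ) * ((n:ℝ) - 2) + 3 * (n.choose 4 : ℝ) := by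
      have haveA := mul_le_mul_of_nonneg_right hIr (le_of_lt h2)
      have hfac : (0:ℝ) ≤ ((n:ℝ)-3) * ((n:ℝ)-2) := by nlinarith
      have haveB := mul_le_mul_of_nonneg_right hII hfac
      nlinarith [haveA, haveB, hN4]
    have hfin : (cyc4Count r : ℝ)/(n.choose 4 : ℝ) - (trans4Count r : ℝ)/(n.choose 4 : ℝ)
        ≤ 3 / ((n:ℝ) - 2) := by
      rw [div_sub_div_same, div_le_div_iff₀ hN h2]
      nlinarith [key]
    linarith
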